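/- In Ā[r] the identity η_R(a_3^3 + 3a_2a_3a_4) − (a_3^3 + 3a_2a_3a_4) = −a_2^2·(a_2r^3 + a_3r^2 + a_4r) holds, where η_R is applied multiplicatively to products of the a_i. -/

import Mathlib

/-!
`Abar = 𝔽_5[a_2,a_3,a_4]` (the variable `0,1,2 : Fin 3` are `a_2, a_3, a_4`),
`q(t) = t^5 + a_2t^3 + a_3t^2 + a_4t`, and `etaR : Abar → Abar[r]` is the
𝔽_5-algebra map sending `a_i` to the coefficient of `x^{5-i}` in `q(x+r) - q(r)`,
computed in `Abar[r][x]`.  This is the reduction modulo `(5, a_1, a_5)` of the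
Gorbounov–Hopkins–Mahowald Hopf algebroid at the prime `5`.
-/

/-- The ring `Ā = 𝔽_5[a_2,a_3,a_4]`. -/
abbrev Abar : Type := MvPolynomial (Fin 3) (ZMod 5)

/-- The generator `a_2`. -/
noncomputable def a2 : Abar := MvPolynomial.X 0
/-- The generator `a_3`. -/
noncomputable def a3 : Abar := MvPolynomial.X 1
/-- The generator `a_4`. -/
noncomputable def a4 : Abar := MvPolynomial.X 2

/-- The polynomial `q(t) = t^5 + a_2t^3 + a_3t^2 + a_4t` as an element of `Ā[t]`. -/
noncomputable def q : Polynomial Abar :=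
  Polynomial.X ^ 5 + Polynomial.C a2 * Polynomial.X ^ 3 + Polynomial.C a3 * Polynomial.X ^ 2 +
    Polynomial.C a4 * Polynomial.X

/-- `q(x+r) - q(r)`, an element of `Ā[r][x]` (the inner variable is `r`, the outer is `x`). -/
noncomputable def qShift : Polynomial (Polynomial Abar) :=
  Polynomial.eval₂ (Polynomial.C.comp Polynomial.C)
      (Polynomial.X + Polynomial.C Polynomial.X) q -
    Polynomial.eval₂ (Polynomial.C.comp Polynomial.C) (Polynomial.C Polynomial.X) q

/-- The right unit `η_R : Ā → Ā[r]`, sending `a_i` (for `i = 2,3,4`) to the coefficient of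
`x^{5-i}` in `q(x+r) - q(r)`. -/
noncomputable def etaR : Abar →ₐ[ZMod 5] Polynomial Abar :=
  MvPolynomial.aeval (fun k : Fin 3 => qShift.coeff (3 - k.1))


open Polynomial in
lemma h5 : (5 : Polynomial Abar) = 0 := by
  have := CharP.cast_eq_zero (Polynomial Abar) 5
  exact_mod_cast this

open Polynomial in
lemma h10 : (10 : Polynomial Abar) = 0 := by
  have : (10 : Polynomial Abar) = 2 * 5 := by norm_num
  rw [this, h5, mul_zero]

open Polynomial in
lemma qShift_eq : qShift =
    X ^ 5 + C (5 * X) * X ^ 4 + C (10 * X ^ 2 + C a2) * X ^ 3 +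
      C (10 * X ^ 3 + 3 * C a2 * X + C a3) * X ^ 2 +
      C (5 * X ^ 4 + 3 * C a2 * X ^ 2 + 2 * C a3 * X + C a4) * X := by
  have hm : ∀ (x : Polynomial (Polynomial Abar)) (p r : Polynomial Abar),
      eval₂ (C.comp C) x (p * r) = eval₂ (C.comp C) x p * eval₂ (C.comp C) x r :=
    fun x p r => Polynomial.eval₂_mul_noncomm _ _ (fun _ => by unfold Commute SemiconjBy; ring)
  simp only [qShift, q, Polynomial.eval₂_add, hm, Polynomial.eval₂_X_pow,
    Polynomial.eval₂_X, Polynomial.eval₂_C, RingHom.coe_comp, Function.comp_apply, map_add,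
    map_mul, map_pow, map_ofNat]
  ring

open Polynomial in
lemma eta2 : etaR a2 = C a2 := by
  have : etaR a2 = qShift.coeff 3 := by simp [etaR, a2]
  rw [this, qShift_eq]
  simp only [coeff_add, coeff_C_mul, coeff_X_pow, coeff_X]
  simp only [h5, h10, zero_mul, mul_zero, zero_add, add_zero, mul_one, mul_zero]
  norm_num

open Polynomial in
lemma eta3 : etaR a3 = C a3 + 3 * C a2 * X := by
  have : etaR a3 = qShift.coeff 2 := by simp [etaR, a3]
  rw [this, qShift_eq]
  simp only [coeff_add, coeff_C_mul, coeff_X_pow, coeff_X]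
  simp only [h5, h10, zero_mul, mul_zero, zero_add, add_zero, mul_one, mul_zero]
  norm_num
  ring

open Polynomial in
lemma eta4 : etaR a4 = C a4 + 2 * C a3 * X + 3 * C a2 * X ^ 2 := by
  have : etaR a4 = qShift.coeff 1 := by simp [etaR, a4]
  rw [this, qShift_eq]
  simp only [coeff_add, coeff_C_mul, coeff_X_pow, coeff_X]
  simp only [h5, h10, zero_mul, mul_zero, zero_add, add_zero, mul_one, mul_zero]
  norm_num
  ring

/-- `η_R(a_3³ + 3a_2a_3a_4) − (a_3³ + 3a_2a_3a_4) = −a_2²·(a_2r³ + a_3r² + a_4r)` in `Ā[r]`. -/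
theorem coboundary_a33 :
    etaR (a3 ^ 3 + 3 * a2 * a3 * a4) - Polynomial.C (a3 ^ 3 + 3 * a2 * a3 * a4) =
      -Polynomial.C (a2 ^ 2) *
        (Polynomial.C a2 * Polynomial.X ^ 3 + Polynomial.C a3 * Polynomial.X ^ 2 +
          Polynomial.C a4 * Polynomial.X) := by
  simp only [map_add, map_mul, map_pow, map_ofNat, eta2, eta3, eta4]
  linear_combination ((3 * Polynomial.C a2 * Polynomial.C a3 ^ 2 +
      2 * Polynomial.C a2 ^ 2 * Polynomial.C a4) * Polynomial.X +
    11 * Polynomial.C a2 ^ 2 * Polynomial.C a3 * Polynomial.X ^ 2 +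
    11 * Polynomial.C a2 ^ 3 * Polynomial.X ^ 3) * h5
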